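/- For n ≥ 2, the alternating subgroup 𝓑⁺(A_n) of the type A braid group is isomorphic to the group presented by generators r_1,…,r_{n−1} and t_0,…,t_{n−1} with relations: r_i r_{i+1} t_{i+1} = r_{i+1}^{−1} r_i^{−1} t_{i−1} and t_{i+1} r_i r_{i+1} = r_{i+1}^{−1} r_i^{−1} t_{i−1} for i = 1,…,n−2; r_i r_{i+1} r_{i+2} t_{i+2} = r_{i+2}^{−1} r_{i+1}^{−1} r_i^{−1} t_{i−1} and t_{i+2} r_i r_{i+1} r_{i+2} = r_{i+2}^{−1} r_{i+1}^{−1} r_i^{−1} t_{i−1} for i = 1,…,n−3; r_i t_i r_i = r_i^{−1} t_{i−1} and (r_i t_i)² = t_{i−1} r_i^{−1} t_{i−1} for i = 1,…,n−1; r_i r_j = r_j r_i for i,j = 1,…,n−1 with |i−j| > 2. An isomorphism is induced by r_i ↦ g_{i−1} g_i^{−1} (i = 1,…,n−1) and t_i ↦ g_i² (i = 0,…,n−1). -/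

import Mathlib

/-- Relations of the type A braid group on the `n + 2` generators `g_0, …, g_{n+1}`:
`g_i g_{i+1} g_i = g_{i+1} g_i g_{i+1}` and `g_i g_j = g_j g_i` for `|i-j| > 1`.
(The `n` here corresponds to `n - 2` in the statement "for `n ≥ 2`".) -/
def braidARels (n : ℕ) : Set (FreeGroup (Fin (n + 2))) :=
  { x | (∃ i : Fin (n + 2), (i : ℕ) < n + 1 ∧
          x = FreeGroup.of i * FreeGroup.of (i + 1) * FreeGroup.of i *
            (FreeGroup.of (i + 1) * FreeGroup.of i * FreeGroup.of (i + 1))⁻¹) ∨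
        (∃ i j : Fin (n + 2), (i : ℕ) + 1 < (j : ℕ) ∧
          x = FreeGroup.of i * FreeGroup.of j * (FreeGroup.of j * FreeGroup.of i)⁻¹) }

/-- The type A braid group `𝓑(A_{n+2})`. -/
def BraidGroupA (n : ℕ) : Type := PresentedGroup (braidARels n)

instance (n : ℕ) : Group (BraidGroupA n) := inferInstanceAs (Group (PresentedGroup (braidARels n)))

/-- The generators of the type A braid group. -/
def braidAGen (n : ℕ) (i : Fin (n + 2)) : BraidGroupA n := PresentedGroup.of i

/-- The sign character of the type A braid group, sending each generator to `-1`. -/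
def braidASign (n : ℕ) : BraidGroupA n →* ℤˣ :=
  PresentedGroup.toGroup (f := fun _ : Fin (n + 2) => (-1 : ℤˣ)) (by
    rintro x (⟨i, hi, rfl⟩ | ⟨i, j, hij, rfl⟩) <;> simp)

/-- The alternating subgroup `𝓑⁺(A_{n+2})` of the type A braid group. -/
def braidAAlt (n : ℕ) : Subgroup (BraidGroupA n) := (braidASign n).ker

/-- Generators of the edge presentation of `𝓑⁺(A_{n+2})`: `r_i` for `i = 1, …, n+1`
(indexed by nonzero elements of `Fin (n+2)`), and `t_i` for `i = 0, …, n+1`. -/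
def GenA (n : ℕ) : Type := {i : Fin (n + 2) // i ≠ 0} ⊕ Fin (n + 2)

/-- The word `r_i` in the free group (junk value `1` if `i = 0`). -/
def rw (n : ℕ) (i : Fin (n + 2)) : FreeGroup (GenA n) :=
  if h : i ≠ 0 then FreeGroup.of (Sum.inl ⟨i, h⟩) else 1

/-- The word `t_i` in the free group. -/
def tw (n : ℕ) (i : Fin (n + 2)) : FreeGroup (GenA n) := FreeGroup.of (Sum.inr i)

open Fin.NatCast in
/-- The relations of the edge presentation of `𝓑⁺(A_{n+2})`, with generators
`r_1, …, r_{n+1}` and `t_0, …, t_{n+1}` (here `i` below runs over `m+1`). -/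
def altBraidARels2 (n : ℕ) : Set (FreeGroup (GenA n)) :=
  { x | (∃ m : ℕ, m + 1 ≤ n ∧
          (x = rw n (↑(m+1)) * rw n (↑(m+2)) * tw n (↑(m+2)) *
              ((rw n (↑(m+2)))⁻¹ * (rw n (↑(m+1)))⁻¹ * tw n (↑m))⁻¹ ∨
           x = tw n (↑(m+2)) * rw n (↑(m+1)) * rw n (↑(m+2)) *
              ((rw n (↑(m+2)))⁻¹ * (rw n (↑(m+1)))⁻¹ * tw n (↑m))⁻¹)) ∨
        (∃ m : ℕ, m + 2 ≤ n ∧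
          (x = rw n (↑(m+1)) * rw n (↑(m+2)) * rw n (↑(m+3)) * tw n (↑(m+3)) *
              ((rw n (↑(m+3)))⁻¹ * (rw n (↑(m+2)))⁻¹ * (rw n (↑(m+1)))⁻¹ * tw n (↑m))⁻¹ ∨
           x = tw n (↑(m+3)) * rw n (↑(m+1)) * rw n (↑(m+2)) * rw n (↑(m+3)) *
              ((rw n (↑(m+3)))⁻¹ * (rw n (↑(m+2)))⁻¹ * (rw n (↑(m+1)))⁻¹ * tw n (↑m))⁻¹)) ∨
        (∃ m : ℕ, m ≤ n ∧
          (x = rw n (↑(m+1)) * tw n (↑(m+1)) * rw n (↑(m+1)) *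
              ((rw n (↑(m+1)))⁻¹ * tw n (↑m))⁻¹ ∨
           x = (rw n (↑(m+1)) * tw n (↑(m+1))) ^ 2 *
              (tw n (↑m) * (rw n (↑(m+1)))⁻¹ * tw n (↑m))⁻¹)) ∨
        (∃ i j : ℕ, 1 ≤ i ∧ i + 2 < j ∧ j ≤ n + 1 ∧
          x = rw n (↑i) * rw n (↑j) * (rw n (↑j) * rw n (↑i))⁻¹) }

open Fin.NatCast

namespace AltBraidProof

open PresentedGroup

variable {n : ℕ}

/-! ### The presented group `P` and its basic relations -/

abbrev P (n : ℕ) : Type := PresentedGroup (altBraidARels2 n)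

def mkP (n : ℕ) : FreeGroup (GenA n) →* P n := PresentedGroup.mk _

lemma relOne {x : FreeGroup (GenA n)} (hx : x ∈ altBraidARels2 n) : mkP n x = 1 :=
  (QuotientGroup.eq_one_iff _).2 (Subgroup.subset_normalClosure hx)

def Rn (n k : ℕ) : P n := mkP n (rw n (↑k))
def Tn (n k : ℕ) : P n := mkP n (tw n (↑k))

lemma relA (m : ℕ) (h : m + 1 ≤ n) :
    Rn n (m+1) * Rn n (m+2) * Tn n (m+2) = (Rn n (m+2))⁻¹ * (Rn n (m+1))⁻¹ * Tn n m :=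
  mul_inv_eq_one.1 (by
    simpa only [map_mul, map_inv, Rn, Tn] using relOne (Or.inl ⟨m, h, Or.inl rfl⟩))

lemma relB (m : ℕ) (h : m + 1 ≤ n) :
    Tn n (m+2) * Rn n (m+1) * Rn n (m+2) = (Rn n (m+2))⁻¹ * (Rn n (m+1))⁻¹ * Tn n m :=
  mul_inv_eq_one.1 (by
    simpa only [map_mul, map_inv, Rn, Tn] using relOne (Or.inl ⟨m, h, Or.inr rfl⟩))

lemma relC (m : ℕ) (h : m + 2 ≤ n) :
    Rn n (m+1) * Rn n (m+2) * Rn n (m+3) * Tn n (m+3)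
      = (Rn n (m+3))⁻¹ * (Rn n (m+2))⁻¹ * (Rn n (m+1))⁻¹ * Tn n m :=
  mul_inv_eq_one.1 (by
    simpa only [map_mul, map_inv, Rn, Tn] using relOne (Or.inr (Or.inl ⟨m, h, Or.inl rfl⟩)))

lemma relD (m : ℕ) (h : m + 2 ≤ n) :
    Tn n (m+3) * Rn n (m+1) * Rn n (m+2) * Rn n (m+3)
      = (Rn n (m+3))⁻¹ * (Rn n (m+2))⁻¹ * (Rn n (m+1))⁻¹ * Tn n m :=
  mul_inv_eq_one.1 (by
    simpa only [map_mul, map_inv, Rn, Tn] using relOne (Or.inr (Or.inl ⟨m, h, Or.inr rfl⟩)))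

lemma relE (m : ℕ) (h : m ≤ n) :
    Rn n (m+1) * Tn n (m+1) * Rn n (m+1) = (Rn n (m+1))⁻¹ * Tn n m :=
  mul_inv_eq_one.1 (by
    simpa only [map_mul, map_inv, Rn, Tn] using relOne (Or.inr (Or.inr (Or.inl ⟨m, h, Or.inl rfl⟩))))

lemma relF (m : ℕ) (h : m ≤ n) :
    (Rn n (m+1) * Tn n (m+1)) ^ 2 = Tn n m * (Rn n (m+1))⁻¹ * Tn n m :=
  mul_inv_eq_one.1 (by
    simpa only [map_mul, map_inv, map_pow, Rn, Tn] using
      relOne (Or.inr (Or.inr (Or.inl ⟨m, h, Or.inr rfl⟩))))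

lemma relG (i j : ℕ) (h1 : 1 ≤ i) (h2 : i + 2 < j) (h3 : j ≤ n + 1) :
    Rn n i * Rn n j = Rn n j * Rn n i :=
  mul_inv_eq_one.1 (by
    simpa only [map_mul, map_inv, Rn, Tn] using
      relOne (Or.inr (Or.inr (Or.inr ⟨i, j, h1, h2, h3, rfl⟩))))

end AltBraidProof
namespace AltBraidProof

variable {n : ℕ}

/-! ### Words `W`, `U`, `Y` -/

def Wn (n a : ℕ) : ℕ → P n
  | 0 => 1
  | d + 1 => Wn n a d * Rn n (a + d + 1)

def Un (n k : ℕ) : P n := Wn n 0 k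

def Yn (n k : ℕ) : P n := Un n k * Tn n k

lemma Wn_zero (a : ℕ) : Wn n a 0 = 1 := rfl

lemma Wn_one (a : ℕ) : Wn n a 1 = Rn n (a+1) := by simp [Wn]

lemma Wn_two (a : ℕ) : Wn n a 2 = Rn n (a+1) * Rn n (a+2) := by
  show Wn n a 1 * Rn n (a+1+1) = _
  rw [Wn_one]

lemma Wn_three (a : ℕ) : Wn n a 3 = Rn n (a+1) * Rn n (a+2) * Rn n (a+3) := by
  show Wn n a 2 * Rn n (a+2+1) = _
  rw [Wn_two]

lemma Wn_add (a d e : ℕ) : Wn n a (d + e) = Wn n a d * Wn n (a + d) e := by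
  induction e with
  | zero => simp [Wn]
  | succ e ih =>
      show Wn n a (d+e) * Rn n (a + (d+e) + 1) = Wn n a d * (Wn n (a+d) e * Rn n (a+d+e+1))
      have e : a + (d + e) + 1 = a + d + e + 1 := by omega
      rw [ih, mul_assoc, e]

lemma Un_succ (k : ℕ) : Un n (k+1) = Un n k * Rn n (k+1) := by
  show Wn n 0 k * Rn n (0 + k + 1) = _
  rw [Nat.zero_add]
  rfl

lemma Un_add (i d : ℕ) : Un n (i + d) = Un n i * Wn n i d := by
  have := Wn_add (n := n) 0 i d
  rwa [Nat.zero_add] at this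

/-! ### Substitution forms of the relations -/

lemma subA (m : ℕ) (h : m + 1 ≤ n) :
    Tn n (m+2) = (Rn n (m+2))⁻¹ * (Rn n (m+1))⁻¹ * (Rn n (m+2))⁻¹ * (Rn n (m+1))⁻¹ * Tn n m := by
  calc Tn n (m+2)
      = (Rn n (m+2))⁻¹ * (Rn n (m+1))⁻¹ * (Rn n (m+1) * Rn n (m+2) * Tn n (m+2)) := by group
    _ = (Rn n (m+2))⁻¹ * (Rn n (m+1))⁻¹ * ((Rn n (m+2))⁻¹ * (Rn n (m+1))⁻¹ * Tn n m) := by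
        rw [relA m h]
    _ = _ := by group

lemma subB (m : ℕ) (h : m + 1 ≤ n) :
    Tn n (m+2) = (Rn n (m+2))⁻¹ * (Rn n (m+1))⁻¹ * Tn n m * (Rn n (m+2))⁻¹ * (Rn n (m+1))⁻¹ := by
  calc Tn n (m+2)
      = (Tn n (m+2) * Rn n (m+1) * Rn n (m+2)) * ((Rn n (m+1) * Rn n (m+2))⁻¹) := by group
    _ = ((Rn n (m+2))⁻¹ * (Rn n (m+1))⁻¹ * Tn n m) * ((Rn n (m+1) * Rn n (m+2))⁻¹) := by
        rw [relB m h]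
    _ = _ := by group

lemma subC (m : ℕ) (h : m + 2 ≤ n) :
    Tn n (m+3) = (Rn n (m+3))⁻¹ * (Rn n (m+2))⁻¹ * (Rn n (m+1))⁻¹ *
      (Rn n (m+3))⁻¹ * (Rn n (m+2))⁻¹ * (Rn n (m+1))⁻¹ * Tn n m := by
  calc Tn n (m+3)
      = (Rn n (m+3))⁻¹ * (Rn n (m+2))⁻¹ * (Rn n (m+1))⁻¹ *
          (Rn n (m+1) * Rn n (m+2) * Rn n (m+3) * Tn n (m+3)) := by group
    _ = (Rn n (m+3))⁻¹ * (Rn n (m+2))⁻¹ * (Rn n (m+1))⁻¹ *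
          ((Rn n (m+3))⁻¹ * (Rn n (m+2))⁻¹ * (Rn n (m+1))⁻¹ * Tn n m) := by rw [relC m h]
    _ = _ := by group

lemma subD (m : ℕ) (h : m + 2 ≤ n) :
    Tn n (m+3) = (Rn n (m+3))⁻¹ * (Rn n (m+2))⁻¹ * (Rn n (m+1))⁻¹ * Tn n m *
      (Rn n (m+3))⁻¹ * (Rn n (m+2))⁻¹ * (Rn n (m+1))⁻¹ := by
  calc Tn n (m+3)
      = (Tn n (m+3) * Rn n (m+1) * Rn n (m+2) * Rn n (m+3)) *
          (Rn n (m+1) * Rn n (m+2) * Rn n (m+3))⁻¹ := by group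
    _ = ((Rn n (m+3))⁻¹ * (Rn n (m+2))⁻¹ * (Rn n (m+1))⁻¹ * Tn n m) *
          (Rn n (m+1) * Rn n (m+2) * Rn n (m+3))⁻¹ := by rw [relD m h]
    _ = _ := by group

lemma subE (m : ℕ) (h : m ≤ n) :
    Tn n (m+1) = (Rn n (m+1))⁻¹ * (Rn n (m+1))⁻¹ * Tn n m * (Rn n (m+1))⁻¹ := by
  calc Tn n (m+1)
      = (Rn n (m+1))⁻¹ * (Rn n (m+1) * Tn n (m+1) * Rn n (m+1)) * (Rn n (m+1))⁻¹ := by group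
    _ = (Rn n (m+1))⁻¹ * ((Rn n (m+1))⁻¹ * Tn n m) * (Rn n (m+1))⁻¹ := by rw [relE m h]
    _ = _ := by group

/-- substituted form of relation F: `T R⁻¹ T = R⁻¹ T R⁻¹ R⁻¹ T R⁻¹`. -/
lemma relF' (m : ℕ) (h : m ≤ n) :
    Tn n m * (Rn n (m+1))⁻¹ * Tn n m =
      (Rn n (m+1))⁻¹ * Tn n m * (Rn n (m+1))⁻¹ * (Rn n (m+1))⁻¹ * Tn n m * (Rn n (m+1))⁻¹ := by
  have hf := relF m h
  rw [subE m h] at hf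
  rw [← hf, pow_two]
  group

/-- conjugation of `R_{m+1}` by `R_{m+2} R_{m+3}`. -/
lemma relM (m : ℕ) (h : m + 2 ≤ n) :
    Rn n (m+2) * Rn n (m+3) * Rn n (m+1) * (Rn n (m+3))⁻¹ * (Rn n (m+2))⁻¹
      = (Rn n (m+1))⁻¹ * Tn n m * (Tn n (m+1))⁻¹ := by
  have hA := subA (m+1) h
  -- hA : Tn (m+3) = R(m+3)⁻¹ R(m+2)⁻¹ R(m+3)⁻¹ R(m+2)⁻¹ T(m+1)
  have hC : Tn n m = Rn n (m+1) * Rn n (m+2) * Rn n (m+3) *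
      Rn n (m+1) * Rn n (m+2) * Rn n (m+3) * Tn n (m+3) := by
    calc Tn n m
        = (Rn n (m+1) * Rn n (m+2) * Rn n (m+3)) *
            ((Rn n (m+3))⁻¹ * (Rn n (m+2))⁻¹ * (Rn n (m+1))⁻¹ * Tn n m) := by group
      _ = (Rn n (m+1) * Rn n (m+2) * Rn n (m+3)) *
            (Rn n (m+1) * Rn n (m+2) * Rn n (m+3) * Tn n (m+3)) := by rw [← relC m h]
      _ = _ := by group
  rw [hC, hA]
  group

/-- commutation of adjacent pair products: `(R_{m+1} R_{m+2}) (R_{m+3} R_{m+4}) = ...`. -/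
lemma relO2 (m : ℕ) (h : m + 3 ≤ n) :
    (Rn n (m+1) * Rn n (m+2)) * (Rn n (m+3) * Rn n (m+4))
      = (Rn n (m+3) * Rn n (m+4)) * (Rn n (m+1) * Rn n (m+2)) := by
  have hM1 := relM (n := n) m (by omega)
  have hM2 := relM (n := n) (m+1) (by omega)
  -- hM2 about indices m+2..m+4, with T (m+1), T (m+2); rewrite indices
  have e1 : m + 1 + 2 = m + 3 := by omega
  have e2 : m + 1 + 3 = m + 4 := by omega
  have e3 : m + 1 + 1 = m + 2 := by omega
  rw [e1, e2, e3] at hM2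
  -- hM2 : R(m+3) R(m+4) R(m+2) R(m+4)⁻¹ R(m+3)⁻¹ = R(m+2)⁻¹ T(m+1) T(m+2)⁻¹
  have hG := relG (n := n) (m+1) (m+4) (by omega) (by omega) (by omega)
  -- derived forms
  have i1 : Rn n (m+3) * Rn n (m+1) =
      (Rn n (m+2))⁻¹ * ((Rn n (m+1))⁻¹ * Tn n m * (Tn n (m+1))⁻¹) * (Rn n (m+2) * Rn n (m+3)) := by
    calc Rn n (m+3) * Rn n (m+1)
        = (Rn n (m+2))⁻¹ *
            (Rn n (m+2) * Rn n (m+3) * Rn n (m+1) * (Rn n (m+3))⁻¹ * (Rn n (m+2))⁻¹) *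
            (Rn n (m+2) * Rn n (m+3)) := by group
      _ = _ := by rw [hM1]
  have i2 : Rn n (m+4) * Rn n (m+2) =
      (Rn n (m+3))⁻¹ * ((Rn n (m+2))⁻¹ * Tn n (m+1) * (Tn n (m+2))⁻¹) * (Rn n (m+3) * Rn n (m+4)) := by
    calc Rn n (m+4) * Rn n (m+2)
        = (Rn n (m+3))⁻¹ *
            (Rn n (m+3) * Rn n (m+4) * Rn n (m+2) * (Rn n (m+4))⁻¹ * (Rn n (m+3))⁻¹) *
            (Rn n (m+3) * Rn n (m+4)) := by group
      _ = _ := by rw [hM2]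
  calc (Rn n (m+1) * Rn n (m+2)) * (Rn n (m+3) * Rn n (m+4))
      = Rn n (m+1) * Rn n (m+2) * Rn n (m+3) * Rn n (m+4) := by group
    _ = (Rn n (m+3) * Rn n (m+4)) * (Rn n (m+1) * Rn n (m+2)) := by
        -- show RHS equals LHS instead
        symm
        calc (Rn n (m+3) * Rn n (m+4)) * (Rn n (m+1) * Rn n (m+2))
            = Rn n (m+3) * (Rn n (m+1) * Rn n (m+4)) * Rn n (m+2) := by
              rw [hG]; group
          _ = (Rn n (m+3) * Rn n (m+1)) * (Rn n (m+4) * Rn n (m+2)) := by group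
          _ = ((Rn n (m+2))⁻¹ * ((Rn n (m+1))⁻¹ * Tn n m * (Tn n (m+1))⁻¹) * (Rn n (m+2) * Rn n (m+3))) *
              ((Rn n (m+3))⁻¹ * ((Rn n (m+2))⁻¹ * Tn n (m+1) * (Tn n (m+2))⁻¹) * (Rn n (m+3) * Rn n (m+4))) := by
              rw [i1, i2]
          _ = (Rn n (m+2))⁻¹ * (Rn n (m+1))⁻¹ * Tn n m * (Tn n (m+2))⁻¹ * Rn n (m+3) * Rn n (m+4) := by
              group
          _ = Rn n (m+1) * Rn n (m+2) * Rn n (m+3) * Rn n (m+4) := by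
              rw [subA m (by omega)]
              group

end AltBraidProof
namespace AltBraidProof

variable {n : ℕ}

lemma P1two (i : ℕ) (h : i + 2 ≤ n + 1) :
    (Rn n (i+1) * Rn n (i+2)) * (Rn n (i+1) * Rn n (i+2)) * Tn n (i+2) = Tn n i := by
  calc (Rn n (i+1) * Rn n (i+2)) * (Rn n (i+1) * Rn n (i+2)) * Tn n (i+2)
      = (Rn n (i+1) * Rn n (i+2)) * (Rn n (i+1) * Rn n (i+2) * Tn n (i+2)) := by group
    _ = (Rn n (i+1) * Rn n (i+2)) * ((Rn n (i+2))⁻¹ * (Rn n (i+1))⁻¹ * Tn n i) := by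
        rw [relA i (by omega)]
    _ = Tn n i := by group

lemma P2two (i : ℕ) (h : i + 2 ≤ n + 1) :
    (Rn n (i+1) * Rn n (i+2)) * Tn n (i+2) * (Rn n (i+1) * Rn n (i+2)) = Tn n i := by
  calc (Rn n (i+1) * Rn n (i+2)) * Tn n (i+2) * (Rn n (i+1) * Rn n (i+2))
      = (Rn n (i+1) * Rn n (i+2)) * (Tn n (i+2) * Rn n (i+1) * Rn n (i+2)) := by group
    _ = (Rn n (i+1) * Rn n (i+2)) * ((Rn n (i+2))⁻¹ * (Rn n (i+1))⁻¹ * Tn n i) := by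
        rw [relB i (by omega)]
    _ = Tn n i := by group

lemma P1three (i : ℕ) (h : i + 3 ≤ n + 1) :
    (Rn n (i+1) * Rn n (i+2) * Rn n (i+3)) * (Rn n (i+1) * Rn n (i+2) * Rn n (i+3)) *
      Tn n (i+3) = Tn n i := by
  calc (Rn n (i+1) * Rn n (i+2) * Rn n (i+3)) * (Rn n (i+1) * Rn n (i+2) * Rn n (i+3)) *
      Tn n (i+3)
      = (Rn n (i+1) * Rn n (i+2) * Rn n (i+3)) *
          (Rn n (i+1) * Rn n (i+2) * Rn n (i+3) * Tn n (i+3)) := by group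
    _ = (Rn n (i+1) * Rn n (i+2) * Rn n (i+3)) *
          ((Rn n (i+3))⁻¹ * (Rn n (i+2))⁻¹ * (Rn n (i+1))⁻¹ * Tn n i) := by
        rw [relC i (by omega)]
    _ = Tn n i := by group

lemma P2three (i : ℕ) (h : i + 3 ≤ n + 1) :
    (Rn n (i+1) * Rn n (i+2) * Rn n (i+3)) * Tn n (i+3) *
      (Rn n (i+1) * Rn n (i+2) * Rn n (i+3)) = Tn n i := by
  calc (Rn n (i+1) * Rn n (i+2) * Rn n (i+3)) * Tn n (i+3) *
      (Rn n (i+1) * Rn n (i+2) * Rn n (i+3))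
      = (Rn n (i+1) * Rn n (i+2) * Rn n (i+3)) *
          (Tn n (i+3) * Rn n (i+1) * Rn n (i+2) * Rn n (i+3)) := by group
    _ = (Rn n (i+1) * Rn n (i+2) * Rn n (i+3)) *
          ((Rn n (i+3))⁻¹ * (Rn n (i+2))⁻¹ * (Rn n (i+1))⁻¹ * Tn n i) := by
        rw [relD i (by omega)]
    _ = Tn n i := by group

lemma relO (m e : ℕ) (he : 2 ≤ e) (hb : m + 2 + e ≤ n + 1) :
    (Rn n (m+1) * Rn n (m+2)) * Wn n (m+2) e = Wn n (m+2) e * (Rn n (m+1) * Rn n (m+2)) := by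
  induction e, he using Nat.le_induction with
  | base =>
      rw [Wn_two]
      have e1 : m + 2 + 1 = m + 3 := by omega
      have e2 : m + 2 + 2 = m + 4 := by omega
      rw [e1, e2]
      exact relO2 m (by omega)
  | succ e he ih =>
      have hg1 := relG (n := n) (m+1) (m+2+e+1) (by omega) (by omega) (by omega)
      have hg2 := relG (n := n) (m+2) (m+2+e+1) (by omega) (by omega) (by omega)
      have ih' := ih (by omega)
      show (Rn n (m+1) * Rn n (m+2)) * (Wn n (m+2) e * Rn n (m+2+e+1))
          = (Wn n (m+2) e * Rn n (m+2+e+1)) * (Rn n (m+1) * Rn n (m+2))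
      calc (Rn n (m+1) * Rn n (m+2)) * (Wn n (m+2) e * Rn n (m+2+e+1))
          = ((Rn n (m+1) * Rn n (m+2)) * Wn n (m+2) e) * Rn n (m+2+e+1) := by group
        _ = (Wn n (m+2) e * (Rn n (m+1) * Rn n (m+2))) * Rn n (m+2+e+1) := by rw [ih']
        _ = Wn n (m+2) e * (Rn n (m+1) * (Rn n (m+2) * Rn n (m+2+e+1))) := by group
        _ = Wn n (m+2) e * (Rn n (m+1) * (Rn n (m+2+e+1) * Rn n (m+2))) := by rw [hg2]
        _ = Wn n (m+2) e * ((Rn n (m+1) * Rn n (m+2+e+1)) * Rn n (m+2)) := by group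
        _ = Wn n (m+2) e * ((Rn n (m+2+e+1) * Rn n (m+1)) * Rn n (m+2)) := by rw [hg1]
        _ = _ := by group

lemma relP12 (d : ℕ) : ∀ i : ℕ, 2 ≤ d → i + d ≤ n + 1 →
    (Wn n i d * Wn n i d * Tn n (i+d) = Tn n i ∧
      Wn n i d * Tn n (i+d) * Wn n i d = Tn n i) := by
  induction d using Nat.strong_induction_on with
  | _ d ih =>
    rcases d with _ | _ | _ | _ | e
    · omega
    · omega
    · intro i _ hb
      rw [Wn_two]
      exact ⟨P1two i hb, P2two i hb⟩
    · intro i _ hb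
      rw [Wn_three]
      exact ⟨P1three i hb, P2three i hb⟩
    · intro i _ hb
      have hsplit : Wn n i (e+4) = (Rn n (i+1) * Rn n (i+2)) * Wn n (i+2) (e+2) := by
        have h := Wn_add (n := n) i 2 (e+2)
        rw [show 2 + (e+2) = e + 4 from by omega] at h
        rw [h, Wn_two]
      have hO := relO (n := n) i (e+2) (by omega) (by omega)
      have ihW := ih (e+2) (by omega) (i+2) (by omega) (by omega)
      rw [show i + 2 + (e + 2) = i + (e+4) from by omega] at ihW
      obtain ⟨ih1, ih2⟩ := ihW
      constructor
      · calc Wn n i (e+4) * Wn n i (e+4) * Tn n (i+(e+4))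
            = ((Rn n (i+1) * Rn n (i+2)) * Wn n (i+2) (e+2)) *
              ((Rn n (i+1) * Rn n (i+2)) * Wn n (i+2) (e+2)) * Tn n (i+(e+4)) := by rw [hsplit]
          _ = (Rn n (i+1) * Rn n (i+2)) *
              (Wn n (i+2) (e+2) * (Rn n (i+1) * Rn n (i+2))) *
              (Wn n (i+2) (e+2) * Tn n (i+(e+4))) := by group
          _ = (Rn n (i+1) * Rn n (i+2)) *
              ((Rn n (i+1) * Rn n (i+2)) * Wn n (i+2) (e+2)) *
              (Wn n (i+2) (e+2) * Tn n (i+(e+4))) := by rw [hO]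
          _ = (Rn n (i+1) * Rn n (i+2)) * (Rn n (i+1) * Rn n (i+2)) *
              (Wn n (i+2) (e+2) * Wn n (i+2) (e+2) * Tn n (i+(e+4))) := by group
          _ = (Rn n (i+1) * Rn n (i+2)) * (Rn n (i+1) * Rn n (i+2)) * Tn n (i+2) := by rw [ih1]
          _ = Tn n i := P1two i (by omega)
      · calc Wn n i (e+4) * Tn n (i+(e+4)) * Wn n i (e+4)
            = ((Rn n (i+1) * Rn n (i+2)) * Wn n (i+2) (e+2)) * Tn n (i+(e+4)) *
              ((Rn n (i+1) * Rn n (i+2)) * Wn n (i+2) (e+2)) := by rw [hsplit]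
          _ = (Rn n (i+1) * Rn n (i+2)) *
              (Wn n (i+2) (e+2) * Tn n (i+(e+4)) * ((Rn n (i+1) * Rn n (i+2)) *
                Wn n (i+2) (e+2))) := by group
          _ = (Rn n (i+1) * Rn n (i+2)) *
              (Wn n (i+2) (e+2) * Tn n (i+(e+4)) * (Wn n (i+2) (e+2) *
                (Rn n (i+1) * Rn n (i+2)))) := by rw [hO]
          _ = (Rn n (i+1) * Rn n (i+2)) *
              (Wn n (i+2) (e+2) * Tn n (i+(e+4)) * Wn n (i+2) (e+2)) *
              (Rn n (i+1) * Rn n (i+2)) := by group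
          _ = (Rn n (i+1) * Rn n (i+2)) * Tn n (i+2) * (Rn n (i+1) * Rn n (i+2)) := by rw [ih2]
          _ = Tn n i := P2two i (by omega)

lemma relN (i d j : ℕ) (hd : 2 ≤ d) (hj : i + d = j) (hb : j ≤ n + 1) :
    (Yn n i)⁻¹ * Yn n j = (Wn n i d)⁻¹ := by
  subst hj
  have h2 := (relP12 (n := n) d i hd hb).2
  rw [Yn, Yn, Un_add i d, ← h2]
  group

lemma commUY (i d j : ℕ) (hd : 2 ≤ d) (hj : i + d = j) (hb : j ≤ n + 1) :
    (Un n i)⁻¹ * Yn n j = (Un n j)⁻¹ * Yn n i := by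
  subst hj
  have h1 := (relP12 (n := n) d i hd hb).1
  rw [Yn, Yn, Un_add i d, ← h1]
  group

end AltBraidProof
namespace AltBraidProof

variable {n : ℕ}

/-! ### The map `α` (conjugation by `g₀` rewritten in the generators) -/

def fA (n : ℕ) : GenA n → P n
  | Sum.inl ⟨i, _⟩ => Yn n (i.val - 1) * (Yn n i.val)⁻¹
  | Sum.inr i => Yn n i.val * (Un n i.val)⁻¹

lemma cast_ne_zero {k : ℕ} (h1 : k ≠ 0) (h2 : k ≤ n + 1) : (k : Fin (n + 2)) ≠ 0 := by
  intro h
  rw [Fin.ext_iff, Fin.val_cast_of_lt (by omega)] at h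
  exact h1 h

lemma liftA_rw (k : ℕ) (h1 : k ≠ 0) (h2 : k ≤ n + 1) :
    FreeGroup.lift (fA n) (rw n ↑k) = Yn n (k-1) * (Yn n k)⁻¹ := by
  rw [rw, dif_pos (cast_ne_zero h1 h2)]
  erw [FreeGroup.lift_apply_of]
  simp only [fA, Fin.val_cast_of_lt (show k < n + 2 by omega)]

lemma liftA_tw (k : ℕ) (h2 : k ≤ n + 1) :
    FreeGroup.lift (fA n) (tw n ↑k) = Yn n k * (Un n k)⁻¹ := by
  rw [tw]
  erw [FreeGroup.lift_apply_of]
  simp only [fA, Fin.val_cast_of_lt (show k < n + 2 by omega)]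

lemma Un_two (m : ℕ) : Un n (m+2) = Un n m * Rn n (m+1) * Rn n (m+2) := by
  rw [show m + 2 = (m+1)+1 from rfl, Un_succ, Un_succ]

lemma Un_three (m : ℕ) : Un n (m+3) = Un n m * Rn n (m+1) * Rn n (m+2) * Rn n (m+3) := by
  rw [show m + 3 = (m+2)+1 from rfl, Un_succ, Un_two]

set_option maxHeartbeats 1600000 in
lemma fA_rels : ∀ r ∈ altBraidARels2 n, FreeGroup.lift (fA n) r = 1 := by
  rintro x (⟨m, hm, (rfl|rfl)⟩ | ⟨m, hm, (rfl|rfl)⟩ | ⟨m, hm, (rfl|rfl)⟩ |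
    ⟨i, j, h1, h2, h3, rfl⟩)
  -- case A
  · simp only [map_mul, map_inv,
      liftA_rw (n := n) (m+1) (by omega) (by omega), liftA_rw (n := n) (m+2) (by omega) (by omega),
      liftA_tw (n := n) (m+2) (by omega), liftA_tw (n := n) m (by omega),
      Nat.add_sub_cancel, show m+2-1 = m+1 from rfl, Yn]
    rw [Un_two m, Un_succ m, subB m hm]
    group
  -- case B
  · simp only [map_mul, map_inv,
      liftA_rw (n := n) (m+1) (by omega) (by omega), liftA_rw (n := n) (m+2) (by omega) (by omega),
      liftA_tw (n := n) (m+2) (by omega), liftA_tw (n := n) m (by omega),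
      Nat.add_sub_cancel, show m+2-1 = m+1 from rfl, Yn]
    rw [Un_two m, Un_succ m, subA m hm]
    group
  -- case C
  · simp only [map_mul, map_inv,
      liftA_rw (n := n) (m+1) (by omega) (by omega), liftA_rw (n := n) (m+2) (by omega) (by omega),
      liftA_rw (n := n) (m+3) (by omega) (by omega),
      liftA_tw (n := n) (m+3) (by omega), liftA_tw (n := n) m (by omega),
      Nat.add_sub_cancel, show m+2-1 = m+1 from rfl, show m+3-1 = m+2 from rfl, Yn]
    rw [Un_three m, Un_two m, Un_succ m, subD m hm]
    group
  -- case D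
  · simp only [map_mul, map_inv,
      liftA_rw (n := n) (m+1) (by omega) (by omega), liftA_rw (n := n) (m+2) (by omega) (by omega),
      liftA_rw (n := n) (m+3) (by omega) (by omega),
      liftA_tw (n := n) (m+3) (by omega), liftA_tw (n := n) m (by omega),
      Nat.add_sub_cancel, show m+2-1 = m+1 from rfl, show m+3-1 = m+2 from rfl, Yn]
    rw [Un_three m, Un_two m, Un_succ m, subC m hm]
    group
  -- case E
  · simp only [map_mul, map_inv,
      liftA_rw (n := n) (m+1) (by omega) (by omega),
      liftA_tw (n := n) (m+1) (by omega), liftA_tw (n := n) m (by omega),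
      Nat.add_sub_cancel, Yn]
    rw [Un_succ m, subE m hm]
    trans (Un n m * ((Tn n m * (Rn n (m+1))⁻¹ * Tn n m) *
        ((Rn n (m+1))⁻¹ * Tn n m * (Rn n (m+1))⁻¹ * (Rn n (m+1))⁻¹ * Tn n m *
          (Rn n (m+1))⁻¹)⁻¹) * (Un n m)⁻¹)
    · group
    · rw [relF' m hm]
      group
  -- case F
  · simp only [map_mul, map_inv, map_pow,
      liftA_rw (n := n) (m+1) (by omega) (by omega),
      liftA_tw (n := n) (m+1) (by omega), liftA_tw (n := n) m (by omega),
      Nat.add_sub_cancel, Yn]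
    rw [Un_succ m, subE m hm, pow_two]
    group
  -- case G
  · rcases i with _ | m
    · omega
    · obtain ⟨e, rfl⟩ : ∃ e, j = m + 4 + e := ⟨j - (m+4), by omega⟩
      simp only [map_mul, map_inv,
        liftA_rw (n := n) (m+1) (by omega) (by omega), liftA_rw (n := n) (m+4+e) (by omega) (by omega),
        Nat.add_sub_cancel]
      rw [show m + 4 + e - 1 = m + 3 + e from by omega, mul_inv_eq_one]
      have n1 := relN (n := n) (m+1) (e+2) (m+3+e) (by omega) (by omega) (by omega)
      have n2 := relN (n := n) (m+1) (e+3) (m+4+e) (by omega) (by omega) (by omega)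
      have n3 := relN (n := n) m (e+3) (m+3+e) (by omega) (by omega) (by omega)
      have n4 := relN (n := n) m (e+4) (m+4+e) (by omega) (by omega) (by omega)
      have y3 : Yn n m = Yn n (m+3+e) * Wn n m (e+3) := by
        calc Yn n m = Yn n (m+3+e) * ((Yn n m)⁻¹ * Yn n (m+3+e))⁻¹ := by group
          _ = Yn n (m+3+e) * ((Wn n m (e+3))⁻¹)⁻¹ := by rw [n3]
          _ = _ := by group
      have y4 : (Yn n (m+4+e))⁻¹ * Yn n m = Wn n m (e+4) := by
        calc (Yn n (m+4+e))⁻¹ * Yn n m = ((Yn n m)⁻¹ * Yn n (m+4+e))⁻¹ := by group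
          _ = ((Wn n m (e+4))⁻¹)⁻¹ := by rw [n4]
          _ = _ := by group
      have y2 : (Yn n (m+1))⁻¹ = (Wn n (m+1) (e+3))⁻¹ * (Yn n (m+4+e))⁻¹ := by
        calc (Yn n (m+1))⁻¹
            = ((Yn n (m+1))⁻¹ * Yn n (m+4+e)) * (Yn n (m+4+e))⁻¹ := by group
          _ = (Wn n (m+1) (e+3))⁻¹ * (Yn n (m+4+e))⁻¹ := by rw [n2]
      have w1 : Wn n m (e+3) = Rn n (m+1) * Wn n (m+1) (e+2) := by
        have h := Wn_add (n := n) m 1 (e+2)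
        rw [show 1 + (e+2) = e+3 from by omega, Wn_one] at h
        exact h
      have w2 : Wn n m (e+4) = Rn n (m+1) * Wn n (m+1) (e+3) := by
        have h := Wn_add (n := n) m 1 (e+3)
        rw [show 1 + (e+3) = e+4 from by omega, Wn_one] at h
        exact h
      calc Yn n m * (Yn n (m+1))⁻¹ * (Yn n (m+3+e) * (Yn n (m+4+e))⁻¹)
          = Yn n m * ((Yn n (m+1))⁻¹ * Yn n (m+3+e)) * (Yn n (m+4+e))⁻¹ := by group
        _ = Yn n m * (Wn n (m+1) (e+2))⁻¹ * (Yn n (m+4+e))⁻¹ := by rw [n1]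
        _ = (Yn n (m+3+e) * Wn n m (e+3)) * (Wn n (m+1) (e+2))⁻¹ * (Yn n (m+4+e))⁻¹ := by
            rw [← y3]
        _ = Yn n (m+3+e) * (Rn n (m+1) * Wn n (m+1) (e+2)) * (Wn n (m+1) (e+2))⁻¹ *
            (Yn n (m+4+e))⁻¹ := by rw [w1]
        _ = Yn n (m+3+e) * (Rn n (m+1) * Wn n (m+1) (e+3)) * (Wn n (m+1) (e+3))⁻¹ *
            (Yn n (m+4+e))⁻¹ := by group
        _ = Yn n (m+3+e) * Wn n m (e+4) * (Wn n (m+1) (e+3))⁻¹ * (Yn n (m+4+e))⁻¹ := by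
            rw [w2]
        _ = Yn n (m+3+e) * ((Yn n (m+4+e))⁻¹ * Yn n m) * ((Wn n (m+1) (e+3))⁻¹ *
            (Yn n (m+4+e))⁻¹) := by rw [y4]; group
        _ = Yn n (m+3+e) * (Yn n (m+4+e))⁻¹ * (Yn n m * (Yn n (m+1))⁻¹) := by
            rw [y2]; group

def alphaP (n : ℕ) : P n →* P n := PresentedGroup.toGroup (fA_rels (n := n))

lemma alphaP_of (g : GenA n) : alphaP n (PresentedGroup.of g) = fA n g :=
  PresentedGroup.toGroup.of _

lemma alphaP_mk (x : FreeGroup (GenA n)) : alphaP n (mkP n x) = FreeGroup.lift (fA n) x := rfl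

lemma alphaP_R (k : ℕ) (h1 : k ≠ 0) (h2 : k ≤ n + 1) :
    alphaP n (Rn n k) = Yn n (k-1) * (Yn n k)⁻¹ := by
  show alphaP n (mkP n (rw n ↑k)) = _
  rw [alphaP_mk, liftA_rw k h1 h2]

lemma alphaP_T (k : ℕ) (h2 : k ≤ n + 1) :
    alphaP n (Tn n k) = Yn n k * (Un n k)⁻¹ := by
  show alphaP n (mkP n (tw n ↑k)) = _
  rw [alphaP_mk, liftA_tw k h2]

lemma alphaP_U (k : ℕ) (h2 : k ≤ n + 1) :
    alphaP n (Un n k) = Tn n 0 * (Tn n k)⁻¹ * (Un n k)⁻¹ := by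
  induction k with
  | zero =>
      show alphaP n 1 = Tn n 0 * (Tn n 0)⁻¹ * (1 : P n)⁻¹
      rw [map_one]; group
  | succ k ih =>
      rw [Un_succ, map_mul, ih (by omega), alphaP_R (k+1) (by omega) (by omega),
        Nat.add_sub_cancel, Yn, Yn, Un_succ]
      group

lemma alphaP_Y (k : ℕ) (h2 : k ≤ n + 1) :
    alphaP n (Yn n k) = Tn n 0 * (Un n k)⁻¹ := by
  rw [Yn, map_mul, alphaP_U k h2, alphaP_T k h2, Yn]
  group

lemma alphaP_T0 : alphaP n (Tn n 0) = Tn n 0 := by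
  rw [alphaP_T 0 (by omega), Yn]
  show Un n 0 * Tn n 0 * (Un n 0)⁻¹ = _
  rw [show Un n 0 = 1 from rfl]
  group

lemma Rn_of (i : Fin (n+2)) (hi : i ≠ 0) :
    Rn n i.val = PresentedGroup.of (Sum.inl ⟨i, hi⟩) := by
  show mkP n (rw n ↑(i.val)) = _
  rw [Fin.cast_val_eq_self, rw, dif_pos hi]
  rfl

lemma Tn_of (i : Fin (n+2)) : Tn n i.val = PresentedGroup.of (Sum.inr i) := by
  show mkP n (tw n ↑(i.val)) = _
  rw [Fin.cast_val_eq_self]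
  rfl

lemma alpha_sq :
    (alphaP n).comp (alphaP n) = (MulAut.conj (Tn n 0)).toMonoidHom := by
  apply PresentedGroup.ext
  intro g
  rcases g with ⟨i, hi⟩ | i
  · obtain ⟨w, hw⟩ : ∃ w, i.val = w + 1 := by
      refine ⟨i.val - 1, ?_⟩
      have : i.val ≠ 0 := fun h => hi (Fin.ext (by simpa using h))
      omega
    simp only [MonoidHom.comp_apply, MulEquiv.coe_toMonoidHom, MulAut.conj_apply]
    erw [alphaP_of]
    show alphaP n (fA n (Sum.inl ⟨i, hi⟩)) = _
    erw [← Rn_of i hi]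
    simp only [fA]
    rw [hw, Nat.add_sub_cancel, map_mul, map_inv,
      alphaP_Y w (by omega), alphaP_Y (w+1) (by omega), Un_succ w]
    group
  · simp only [MonoidHom.comp_apply, MulEquiv.coe_toMonoidHom, MulAut.conj_apply]
    erw [alphaP_of]
    show alphaP n (fA n (Sum.inr i)) = _
    erw [← Tn_of i]
    simp only [fA]
    rw [map_mul, map_inv, alphaP_Y i.val (by omega), alphaP_U i.val (by omega)]
    group

lemma alpha_alpha (x : P n) : alphaP n (alphaP n x) = Tn n 0 * x * (Tn n 0)⁻¹ := by
  have h := DFunLike.congr_fun (alpha_sq (n := n)) x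
  simpa [MulAut.conj_apply] using h

def alphaInv (n : ℕ) : P n →* P n :=
  ((MulAut.conj (Tn n 0)).symm.toMonoidHom).comp (alphaP n)

lemma alphaInv_apply (x : P n) : alphaInv n x = (Tn n 0)⁻¹ * alphaP n x * Tn n 0 := by
  simp [alphaInv, MulAut.conj_symm_apply, mul_assoc]

def alphaAut (n : ℕ) : P n ≃* P n :=
  MonoidHom.toMulEquiv (alphaP n) (alphaInv n)
    (by
      ext x
      simp only [MonoidHom.comp_apply, MonoidHom.id_apply, alphaInv_apply, alpha_alpha]
      group)
    (by
      ext x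
      simp only [MonoidHom.comp_apply, MonoidHom.id_apply, alphaInv_apply, map_mul, map_inv,
        alphaP_T0, alpha_alpha]
      group)

lemma alphaAut_apply (x : P n) : alphaAut n x = alphaP n x := rfl

end AltBraidProof
namespace AltBraidProof

variable {n : ℕ}

/-! ### The braid group side -/

def mkB (n : ℕ) : FreeGroup (Fin (n+2)) →* BraidGroupA n := PresentedGroup.mk _

lemma relOneB {x : FreeGroup (Fin (n+2))} (hx : x ∈ braidARels n) : mkB n x = 1 :=
  (QuotientGroup.eq_one_iff _).2 (Subgroup.subset_normalClosure hx)

def Gb (n k : ℕ) : BraidGroupA n := braidAGen n ↑k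

lemma cast_add_one_fin (m : ℕ) : ((m : Fin (n+2)) + 1) = ((m+1 : ℕ) : Fin (n+2)) := by
  rw [Nat.cast_add_one]

lemma braidN (m : ℕ) (h : m < n + 1) :
    Gb n m * Gb n (m+1) * Gb n m = Gb n (m+1) * Gb n m * Gb n (m+1) := by
  have key := mul_inv_eq_one.1 (by
    simpa only [map_mul, map_inv] using relOneB (n := n)
      (Or.inl ⟨(m : Fin (n+2)), by rw [Fin.val_cast_of_lt (by omega)]; omega, rfl⟩))
  rw [cast_add_one_fin m] at key
  exact key

lemma commB (i j : ℕ) (h1 : i + 1 < j) (h2 : j ≤ n + 1) :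
    Gb n i * Gb n j = Gb n j * Gb n i := by
  have key := mul_inv_eq_one.1 (by
    simpa only [map_mul, map_inv] using relOneB (n := n)
      (Or.inr ⟨(i : Fin (n+2)), (j : Fin (n+2)), by
        rw [Fin.val_cast_of_lt (show i < n+2 by omega), Fin.val_cast_of_lt (show j < n+2 by omega)]
        omega, rfl⟩))
  exact key

def fB (n : ℕ) : GenA n → BraidGroupA n
  | Sum.inl ⟨i, _⟩ => braidAGen n (i - 1) * (braidAGen n i)⁻¹
  | Sum.inr i => braidAGen n i * braidAGen n i

lemma cast_sub_one (k : ℕ) (h1 : k ≠ 0) (h2 : k ≤ n + 1) :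
    ((k : Fin (n+2)) - 1) = ((k - 1 : ℕ) : Fin (n+2)) := by
  obtain ⟨w, rfl⟩ : ∃ w, k = w + 1 := ⟨k - 1, by omega⟩
  rw [Nat.cast_add_one, add_sub_cancel_right, Nat.add_sub_cancel]

lemma liftB_rw (k : ℕ) (h1 : k ≠ 0) (h2 : k ≤ n + 1) :
    FreeGroup.lift (fB n) (rw n ↑k) = Gb n (k-1) * (Gb n k)⁻¹ := by
  rw [rw, dif_pos (cast_ne_zero h1 h2)]
  erw [FreeGroup.lift_apply_of]
  show braidAGen n ((k : Fin (n+2)) - 1) * (braidAGen n ↑k)⁻¹ = _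
  rw [cast_sub_one k h1 h2]
  rfl

lemma liftB_tw (k : ℕ) :
    FreeGroup.lift (fB n) (tw n ↑k) = Gb n k * Gb n k := by
  rw [tw]
  erw [FreeGroup.lift_apply_of]
  rfl

set_option maxHeartbeats 1600000 in
lemma fB_rels' : ∀ r ∈ altBraidARels2 n, FreeGroup.lift (fB n) r = 1 := by
  rintro x (⟨m, hm, (rfl|rfl)⟩ | ⟨m, hm, (rfl|rfl)⟩ | ⟨m, hm, (rfl|rfl)⟩ |
    ⟨i, j, h1, h2, h3, rfl⟩)
  -- case A
  · simp only [map_mul, map_inv,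
      liftB_rw (n := n) (m+1) (by omega) (by omega), liftB_rw (n := n) (m+2) (by omega) (by omega),
      liftB_tw (n := n) (m+2), liftB_tw (n := n) m,
      Nat.add_sub_cancel, show m+2-1 = m+1 from rfl]
    trans ((Gb n m * Gb n (m+2)) * (Gb n (m+2) * Gb n m)⁻¹)
    · group
    · rw [commB m (m+2) (by omega) (by omega)]
      group
  -- case B
  · simp only [map_mul, map_inv,
      liftB_rw (n := n) (m+1) (by omega) (by omega), liftB_rw (n := n) (m+2) (by omega) (by omega),
      liftB_tw (n := n) (m+2), liftB_tw (n := n) m,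
      Nat.add_sub_cancel, show m+2-1 = m+1 from rfl]
    trans (Gb n (m+2) * ((Gb n (m+2) * Gb n m) * (Gb n m * Gb n (m+2))⁻¹) * (Gb n (m+2))⁻¹)
    · group
    · rw [commB m (m+2) (by omega) (by omega)]
      group
  -- case C
  · simp only [map_mul, map_inv,
      liftB_rw (n := n) (m+1) (by omega) (by omega), liftB_rw (n := n) (m+2) (by omega) (by omega),
      liftB_rw (n := n) (m+3) (by omega) (by omega),
      liftB_tw (n := n) (m+3), liftB_tw (n := n) m,
      Nat.add_sub_cancel, show m+2-1 = m+1 from rfl, show m+3-1 = m+2 from rfl]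
    trans ((Gb n m * Gb n (m+3)) * (Gb n (m+3) * Gb n m)⁻¹)
    · group
    · rw [commB m (m+3) (by omega) (by omega)]
      group
  -- case D
  · simp only [map_mul, map_inv,
      liftB_rw (n := n) (m+1) (by omega) (by omega), liftB_rw (n := n) (m+2) (by omega) (by omega),
      liftB_rw (n := n) (m+3) (by omega) (by omega),
      liftB_tw (n := n) (m+3), liftB_tw (n := n) m,
      Nat.add_sub_cancel, show m+2-1 = m+1 from rfl, show m+3-1 = m+2 from rfl]
    trans (Gb n (m+3) * ((Gb n (m+3) * Gb n m) * (Gb n m * Gb n (m+3))⁻¹) * (Gb n (m+3))⁻¹)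
    · group
    · rw [commB m (m+3) (by omega) (by omega)]
      group
  -- case E
  · simp only [map_mul, map_inv,
      liftB_rw (n := n) (m+1) (by omega) (by omega),
      liftB_tw (n := n) (m+1), liftB_tw (n := n) m,
      Nat.add_sub_cancel]
    trans ((Gb n m * Gb n (m+1) * Gb n m) * (Gb n (m+1) * Gb n m * Gb n (m+1))⁻¹)
    · group
    · rw [braidN m (by omega)]
      group
  -- case F
  · simp only [map_mul, map_inv, map_pow,
      liftB_rw (n := n) (m+1) (by omega) (by omega),
      liftB_tw (n := n) (m+1), liftB_tw (n := n) m,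
      Nat.add_sub_cancel]
    rw [pow_two]
    trans (Gb n m * ((Gb n (m+1) * Gb n m * Gb n (m+1)) * (Gb n m * Gb n (m+1) * Gb n m)⁻¹) *
      (Gb n m)⁻¹)
    · group
    · rw [braidN m (by omega)]
      group
  -- case G
  · rcases i with _ | m
    · omega
    · obtain ⟨e, rfl⟩ : ∃ e, j = m + 4 + e := ⟨j - (m+4), by omega⟩
      simp only [map_mul, map_inv,
        liftB_rw (n := n) (m+1) (by omega) (by omega),
        liftB_rw (n := n) (m+4+e) (by omega) (by omega),
        Nat.add_sub_cancel, show m+4+e-1 = m+3+e from by omega]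
      rw [mul_inv_eq_one]
      have k03 : Commute (Gb n m) (Gb n (m+3+e)) := commB m (m+3+e) (by omega) (by omega)
      have k04 : Commute (Gb n m) (Gb n (m+4+e)) := commB m (m+4+e) (by omega) (by omega)
      have k13 : Commute (Gb n (m+1)) (Gb n (m+3+e)) := commB (m+1) (m+3+e) (by omega) (by omega)
      have k14 : Commute (Gb n (m+1)) (Gb n (m+4+e)) := commB (m+1) (m+4+e) (by omega) (by omega)
      exact ((k03.mul_right k04.inv_right).mul_left ((k13.mul_right k14.inv_right).inv_left)).eq

def phi (n : ℕ) : P n →* BraidGroupA n := PresentedGroup.toGroup (fB_rels' (n := n))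

lemma phi_of (g : GenA n) : phi n (PresentedGroup.of g) = fB n g :=
  PresentedGroup.toGroup.of _

lemma phi_mk (x : FreeGroup (GenA n)) : phi n (mkP n x) = FreeGroup.lift (fB n) x := rfl

lemma phi_R (k : ℕ) (h1 : k ≠ 0) (h2 : k ≤ n + 1) :
    phi n (Rn n k) = Gb n (k-1) * (Gb n k)⁻¹ := by
  show phi n (mkP n (rw n ↑k)) = _
  rw [phi_mk, liftB_rw k h1 h2]

lemma phi_T (k : ℕ) : phi n (Tn n k) = Gb n k * Gb n k := by
  show phi n (mkP n (tw n ↑k)) = _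
  rw [phi_mk, liftB_tw k]

lemma phi_U (k : ℕ) (h : k ≤ n + 1) : phi n (Un n k) = Gb n 0 * (Gb n k)⁻¹ := by
  induction k with
  | zero =>
      show phi n 1 = _
      rw [map_one]; group
  | succ k ih =>
      rw [Un_succ, map_mul, ih (by omega), phi_R (k+1) (by omega) (by omega), Nat.add_sub_cancel]
      group

lemma phi_Y (k : ℕ) (h : k ≤ n + 1) : phi n (Yn n k) = Gb n 0 * Gb n k := by
  rw [Yn, map_mul, phi_U k h, phi_T k]
  group

lemma sign_of (i : Fin (n+2)) : braidASign n (PresentedGroup.of i) = -1 := by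
  exact PresentedGroup.toGroup.of (x := i) _

lemma phi_mem (x : P n) : phi n x ∈ braidAAlt n := by
  suffices h : (braidASign n).comp (phi n) = 1 by
    have := DFunLike.congr_fun h x
    simpa [braidAAlt, MonoidHom.mem_ker] using this
  apply PresentedGroup.ext
  intro g
  rcases g with ⟨i, hi⟩ | i
  · simp only [MonoidHom.comp_apply, MonoidHom.one_apply, phi_of, fB, map_mul, map_inv]
    erw [phi_of]
    simp only [fB, map_mul, map_inv]
    rw [show braidAGen n (i-1) = PresentedGroup.of (i-1) from rfl,
      show braidAGen n i = PresentedGroup.of i from rfl, sign_of, sign_of]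
    decide
  · simp only [MonoidHom.comp_apply, MonoidHom.one_apply, phi_of, fB, map_mul]
    erw [phi_of]
    simp only [fB, map_mul]
    rw [show braidAGen n i = PresentedGroup.of i from rfl, sign_of]
    decide

def phiK (n : ℕ) : P n →* braidAAlt n := (phi n).codRestrict _ (phi_mem)

lemma phiK_coe (x : P n) : (phiK n x : BraidGroupA n) = phi n x := rfl

end AltBraidProof
namespace AltBraidProof

open Multiplicative SemidirectProduct

variable {n : ℕ}

/-! ### The semidirect product receiving the braid group -/

def phiz (n : ℕ) : Multiplicative ℤ →* MulAut (P n) := zpowersHom _ (alphaAut n)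

abbrev Esd (n : ℕ) : Type := SemidirectProduct (P n) (Multiplicative ℤ) (phiz n)

lemma phiz_one_apply (x : P n) : phiz n (ofAdd 1) x = alphaP n x := by
  show (alphaAut n ^ (toAdd (ofAdd (1:ℤ)))) x = _
  rw [toAdd_ofAdd, zpow_one, alphaAut_apply]

lemma phiz_two_apply (x : P n) :
    phiz n (ofAdd 1 * ofAdd 1) x = Tn n 0 * x * (Tn n 0)⁻¹ := by
  show (alphaAut n ^ (toAdd (ofAdd (1:ℤ) * ofAdd (1:ℤ)))) x = _
  rw [show (ofAdd (1:ℤ) * ofAdd (1:ℤ)) = ofAdd 2 from by rw [← ofAdd_add]; norm_num, toAdd_ofAdd,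
    show (2:ℤ) = 1 + 1 from rfl, zpow_add, zpow_one, MulAut.mul_apply, alphaAut_apply,
    alphaAut_apply, alpha_alpha]

lemma alphaP_X (k : ℕ) (h : k ≤ n + 1) :
    alphaP n ((Un n k)⁻¹) = Yn n k * (Tn n 0)⁻¹ := by
  rw [map_inv, alphaP_U k h, Yn]
  group

def fS (n : ℕ) : Fin (n+2) → Esd n := fun i => ⟨(Un n i.val)⁻¹, ofAdd 1⟩

set_option maxHeartbeats 1600000 in
lemma fS_rels : ∀ r ∈ braidARels n, FreeGroup.lift (fS n) r = 1 := by
  rintro x (⟨i, hi, rfl⟩ | ⟨i, j, hij, rfl⟩)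
  · simp only [map_mul, map_inv, FreeGroup.lift_apply_of]
    rw [mul_inv_eq_one]
    have hval : ((i + 1 : Fin (n+2))).val = i.val + 1 := by
      apply Fin.val_add_one_of_lt
      rw [Fin.lt_def, Fin.val_last]
      omega
    apply SemidirectProduct.ext
    · simp only [fS, mul_left, mul_right, phiz_one_apply, phiz_two_apply, hval]
      rw [alphaP_X (i.val + 1) (by omega), alphaP_X i.val (by omega), Yn, Yn, Un_succ i.val,
        subE i.val (by omega)]
      group
    · simp [fS, mul_right]
  · simp only [map_mul, map_inv, FreeGroup.lift_apply_of]
    rw [mul_inv_eq_one]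
    apply SemidirectProduct.ext
    · simp only [fS, mul_left, mul_right, phiz_one_apply]
      rw [alphaP_X j.val (by omega), alphaP_X i.val (by omega)]
      have hc := commUY (n := n) i.val (j.val - i.val) j.val (by omega) (by omega) (by omega)
      calc (Un n i.val)⁻¹ * (Yn n j.val * (Tn n 0)⁻¹)
          = ((Un n i.val)⁻¹ * Yn n j.val) * (Tn n 0)⁻¹ := by group
        _ = ((Un n j.val)⁻¹ * Yn n i.val) * (Tn n 0)⁻¹ := by rw [hc]
        _ = (Un n j.val)⁻¹ * (Yn n i.val * (Tn n 0)⁻¹) := by group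
    · simp [fS, mul_right, mul_comm]

def Psi (n : ℕ) : BraidGroupA n →* Esd n := PresentedGroup.toGroup (fS_rels (n := n))

lemma Psi_of (i : Fin (n+2)) : Psi n (PresentedGroup.of i) = ⟨(Un n i.val)⁻¹, ofAdd 1⟩ :=
  PresentedGroup.toGroup.of _

lemma Psi_gen (i : Fin (n+2)) : Psi n (braidAGen n i) = ⟨(Un n i.val)⁻¹, ofAdd 1⟩ :=
  Psi_of i

/-! ### parity -/

lemma sign_parity (b : BraidGroupA n) :
    braidASign n b = (-1 : ℤˣ) ^ (toAdd (Psi n b).right) := by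
  have h : braidASign n = (zpowersHom ℤˣ (-1)).comp
      ((SemidirectProduct.rightHom).comp (Psi n)) := by
    apply PresentedGroup.ext
    intro i
    erw [MonoidHom.comp_apply, MonoidHom.comp_apply]
    erw [Psi_of, sign_of]
  rw [h]
  rfl

lemma even_exp {m : ℤ} (h : ((-1 : ℤˣ)) ^ m = 1) : ∃ a, m = 2 * a := by
  rcases Int.even_or_odd m with ⟨a, ha⟩ | ⟨a, ha⟩
  · exact ⟨a, by omega⟩
  · exfalso
    rw [ha, zpow_add, zpow_one, zpow_mul, show ((-1:ℤˣ))^(2:ℤ) = 1 from by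
      rw [show (2:ℤ) = 1 + 1 from rfl, zpow_add, zpow_one]; decide] at h
    simp at h

lemma psi_even {b : BraidGroupA n} (hb : b ∈ braidAAlt n) :
    ∃ a : ℤ, toAdd (Psi n b).right = 2 * a := by
  apply even_exp
  rw [← sign_parity]
  exact hb

lemma phiz_even (a : ℤ) (x : P n) :
    phiz n (ofAdd (2*a)) x = (Tn n 0)^a * x * ((Tn n 0)^a)⁻¹ := by
  have h2 : (alphaAut n) ^ (2:ℤ) = MulAut.conj (Tn n 0) := by
    ext y
    rw [show (2:ℤ) = 1 + 1 from rfl, zpow_add, zpow_one, MulAut.mul_apply, alphaAut_apply,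
      alphaAut_apply, alpha_alpha, MulAut.conj_apply]
  show (alphaAut n ^ (toAdd (ofAdd (2*a)))) x = _
  rw [toAdd_ofAdd, zpow_mul, h2, ← map_zpow (MulAut.conj : P n →* MulAut (P n)), MulAut.conj_apply]

end AltBraidProof
namespace AltBraidProof

open Multiplicative SemidirectProduct

variable {n : ℕ}

/-! ### The inverse homomorphism -/

def psiFun (n : ℕ) (b : BraidGroupA n) : P n :=
  (Psi n b).left * (Tn n 0) ^ ((toAdd (Psi n b).right) / 2)

def psiK (n : ℕ) : braidAAlt n →* P n where
  toFun k := psiFun n k.val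
  map_one' := by
    simp [psiFun]
  map_mul' k l := by
    obtain ⟨a, ha⟩ := psi_even (n := n) k.2
    obtain ⟨b, hb⟩ := psi_even (n := n) l.2
    have hra : (Psi n k.val).right = ofAdd (2*a) := by rw [← ha]; simp
    have hrb : (Psi n l.val).right = ofAdd (2*b) := by rw [← hb]; simp
    simp only [psiFun, Subgroup.coe_mul, map_mul, mul_left, mul_right]
    rw [hra, hrb, phiz_even, ← ofAdd_add, toAdd_ofAdd, toAdd_ofAdd, toAdd_ofAdd,
      show (2*a+2*b)/2 = a + b from by omega, show (2*a)/2 = a from by omega,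
      show (2*b)/2 = b from by omega, zpow_add]
    group

lemma psiK_phiK (x : P n) : psiK n (phiK n x) = x := by
  suffices h : (psiK n).comp (phiK n) = MonoidHom.id (P n) from DFunLike.congr_fun h x
  apply PresentedGroup.ext
  intro g
  rw [MonoidHom.comp_apply, MonoidHom.id_apply]
  show psiFun n (phi n (PresentedGroup.of g)) = PresentedGroup.of g
  rw [phi_of]
  rcases g with ⟨i, hi⟩ | i
  · obtain ⟨w, hw⟩ : ∃ w, i.val = w + 1 := by
      refine ⟨i.val - 1, ?_⟩
      have : i.val ≠ 0 := fun h => hi (Fin.ext (by simpa using h))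
      omega
    have hwb : w + 1 ≤ n + 1 := by have := i.isLt; omega
    have e1 : i - 1 = ((w : ℕ) : Fin (n+2)) := by
      rw [← Fin.cast_val_eq_self i, hw, Nat.cast_add_one, add_sub_cancel_right]
    have e2 : i = ((w + 1 : ℕ) : Fin (n+2)) := by
      rw [← Fin.cast_val_eq_self i, hw]
    show psiFun n (braidAGen n (i-1) * (braidAGen n i)⁻¹) = _
    rw [show braidAGen n (i-1) = Gb n w from by rw [e1]; rfl,
      show braidAGen n i = Gb n (w+1) from by rw [e2]; rfl]
    unfold psiFun
    rw [map_mul, map_inv, show Psi n (Gb n w) = ⟨(Un n ((w : Fin (n+2))).val)⁻¹, ofAdd 1⟩ from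
        Psi_gen _,
      show Psi n (Gb n (w+1)) = ⟨(Un n (((w+1 : ℕ) : Fin (n+2))).val)⁻¹, ofAdd 1⟩ from Psi_gen _,
      Fin.val_cast_of_lt (show w < n+2 by omega), Fin.val_cast_of_lt (show w+1 < n+2 by omega)]
    simp only [mul_left, mul_right, inv_left, inv_right]
    rw [map_inv (phiz n), ← MulAut.mul_apply, mul_inv_cancel, MulAut.one_apply]
    rw [show (ofAdd (1:ℤ) * (ofAdd (1:ℤ))⁻¹) = 1 from mul_inv_cancel _,
      show toAdd (1 : Multiplicative ℤ) = 0 from rfl]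
    rw [show (0:ℤ)/2 = 0 from rfl, zpow_zero, Un_succ w]
    erw [← Rn_of i hi]
    rw [hw]
    group
  · show psiFun n (braidAGen n i * braidAGen n i) = _
    unfold psiFun
    rw [map_mul, show Psi n (braidAGen n i) = ⟨(Un n i.val)⁻¹, ofAdd 1⟩ from Psi_gen _]
    simp only [mul_left, mul_right]
    rw [phiz_one_apply, alphaP_X i.val (by omega),
      show (ofAdd (1:ℤ) * ofAdd (1:ℤ)) = ofAdd 2 from by rw [← ofAdd_add]; norm_num,
      toAdd_ofAdd, show (2:ℤ)/2 = 1 from by norm_num, zpow_one]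
    erw [← Tn_of i]
    rw [Yn]
    group

/-! ### Generation of the alternating subgroup -/

def Sset (n : ℕ) : Set (BraidGroupA n) :=
  Set.range (fun g : GenA n => phi n (PresentedGroup.of g))

def Hsub (n : ℕ) : Subgroup (BraidGroupA n) := Subgroup.closure (Sset n)

lemma phi_mem_H (x : P n) : phi n x ∈ Hsub n := by
  have h1 : phi n x ∈ Subgroup.map (phi n) ⊤ := ⟨x, trivial, rfl⟩
  rw [← PresentedGroup.closure_range_of (altBraidARels2 n), MonoidHom.map_closure] at h1
  have himg : (phi n) '' Set.range (PresentedGroup.of (rels := altBraidARels2 n)) = Sset n := by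
    rw [← Set.range_comp]; rfl
  rwa [himg] at h1

lemma conj_gen (g : GenA n) :
    Gb n 0 * (phi n (PresentedGroup.of g)) * (Gb n 0)⁻¹ = phi n (fA n g) := by
  rw [phi_of]
  rcases g with ⟨i, hi⟩ | i
  · obtain ⟨w, hw⟩ : ∃ w, i.val = w + 1 := by
      refine ⟨i.val - 1, ?_⟩
      have : i.val ≠ 0 := fun h => hi (Fin.ext (by simpa using h))
      omega
    have hwb : w + 1 ≤ n + 1 := by have := i.isLt; omega
    have e1 : i - 1 = ((w : ℕ) : Fin (n+2)) := by
      rw [← Fin.cast_val_eq_self i, hw, Nat.cast_add_one, add_sub_cancel_right]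
    have e2 : i = ((w + 1 : ℕ) : Fin (n+2)) := by
      rw [← Fin.cast_val_eq_self i, hw]
    show Gb n 0 * (braidAGen n (i-1) * (braidAGen n i)⁻¹) * (Gb n 0)⁻¹ = _
    rw [show braidAGen n (i-1) = Gb n w from by rw [e1]; rfl,
      show braidAGen n i = Gb n (w+1) from by rw [e2]; rfl]
    show _ = phi n (Yn n (i.val - 1) * (Yn n i.val)⁻¹)
    rw [map_mul, map_inv, hw, Nat.add_sub_cancel, phi_Y w (by omega), phi_Y (w+1) (by omega)]
    group
  · show Gb n 0 * (braidAGen n i * braidAGen n i) * (Gb n 0)⁻¹ = _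
    show _ = phi n (Yn n i.val * (Un n i.val)⁻¹)
    rw [map_mul, map_inv, phi_Y i.val (by omega), phi_U i.val (by omega),
      show braidAGen n i = Gb n i.val from by rw [Gb, Fin.cast_val_eq_self]]
    group

lemma conjH : ∀ h ∈ Hsub n, Gb n 0 * h * (Gb n 0)⁻¹ ∈ Hsub n := by
  intro h hh
  refine Subgroup.closure_induction ?_ ?_ ?_ ?_ hh
  · rintro x ⟨g, rfl⟩
    rw [conj_gen g]
    exact phi_mem_H _
  · rw [mul_one, mul_inv_cancel]; exact one_mem _
  · intro x y _ _ px py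
    have e : Gb n 0 * (x*y) * (Gb n 0)⁻¹ =
        (Gb n 0 * x * (Gb n 0)⁻¹) * (Gb n 0 * y * (Gb n 0)⁻¹) := by group
    rw [e]; exact mul_mem px py
  · intro x _ px
    have e : Gb n 0 * x⁻¹ * (Gb n 0)⁻¹ = (Gb n 0 * x * (Gb n 0)⁻¹)⁻¹ := by group
    rw [e]; exact inv_mem px

lemma g0sq : Gb n 0 * Gb n 0 ∈ Hsub n := by
  have h := phi_mem_H (Tn n 0)
  rwa [phi_T 0] at h

def Hsub' (n : ℕ) : Subgroup (BraidGroupA n) where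
  carrier := {b | (braidASign n b = 1 ∧ b ∈ Hsub n) ∨
    (braidASign n b ≠ 1 ∧ b * (Gb n 0)⁻¹ ∈ Hsub n)}
  one_mem' := Or.inl ⟨map_one _, one_mem _⟩
  mul_mem' := by
    rintro a b (⟨sa, ha⟩|⟨sa, ha⟩) (⟨sb, hb⟩|⟨sb, hb⟩)
    · exact Or.inl ⟨by rw [map_mul, sa, sb, one_mul], mul_mem ha hb⟩
    · refine Or.inr ⟨by rw [map_mul, sa, one_mul]; exact sb, ?_⟩
      have e : a * b * (Gb n 0)⁻¹ = a * (b * (Gb n 0)⁻¹) := by group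
      rw [e]; exact mul_mem ha hb
    · refine Or.inr ⟨by rw [map_mul, sb, mul_one]; exact sa, ?_⟩
      have e : a * b * (Gb n 0)⁻¹ = (a * (Gb n 0)⁻¹) * (Gb n 0 * b * (Gb n 0)⁻¹) := by group
      rw [e]; exact mul_mem ha (conjH b hb)
    · refine Or.inl ⟨?_, ?_⟩
      · have hsa : braidASign n a = -1 := by
          rcases Int.units_eq_one_or (braidASign n a) with h|h
          · exact absurd h sa
          · exact h
        have hsb : braidASign n b = -1 := by
          rcases Int.units_eq_one_or (braidASign n b) with h|h
          · exact absurd h sb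
          · exact h
        rw [map_mul, hsa, hsb]; decide
      · have e : a * b = (a * (Gb n 0)⁻¹) *
            (Gb n 0 * (b * (Gb n 0)⁻¹) * (Gb n 0)⁻¹) * (Gb n 0 * Gb n 0) := by group
        rw [e]
        exact mul_mem (mul_mem ha (conjH _ hb)) g0sq
  inv_mem' := by
    rintro a (⟨sa, ha⟩|⟨sa, ha⟩)
    · exact Or.inl ⟨by rw [map_inv, sa]; decide, inv_mem ha⟩
    · refine Or.inr ⟨?_, ?_⟩
      · have hsa : braidASign n a = -1 := by
          rcases Int.units_eq_one_or (braidASign n a) with h|h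
          · exact absurd h sa
          · exact h
        rw [map_inv, hsa]; decide
      · have e : a⁻¹ * (Gb n 0)⁻¹ = (Gb n 0 * Gb n 0)⁻¹ *
            (Gb n 0 * (a * (Gb n 0)⁻¹)⁻¹ * (Gb n 0)⁻¹) := by group
        rw [e]
        exact mul_mem (inv_mem g0sq) (conjH _ (inv_mem ha))

lemma mem_H_of_alt (b : BraidGroupA n) (hb : braidASign n b = 1) : b ∈ Hsub n := by
  have hall : b ∈ Hsub' n := by
    refine PresentedGroup.generated_by _ (Hsub' n) (fun j => Or.inr ⟨?_, ?_⟩) b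
    · erw [sign_of]; decide
    · show braidAGen n j * (Gb n 0)⁻¹ ∈ Hsub n
      have key : braidAGen n j * (Gb n 0)⁻¹ = phi n ((Un n j.val)⁻¹) := by
        rw [map_inv, phi_U j.val (by omega),
          show Gb n j.val = braidAGen n j from by rw [Gb, Fin.cast_val_eq_self]]
        group
      rw [key]
      exact phi_mem_H _
  rcases hall with ⟨_, h⟩ | ⟨hs, _⟩
  · exact h
  · exact absurd hb hs

lemma H_le_alt : Hsub n ≤ braidAAlt n :=
  (Subgroup.closure_le _).2 (by rintro x ⟨g, rfl⟩; exact phi_mem _)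

lemma phiK_psiK (k : braidAAlt n) : phiK n (psiK n k) = k := by
  have hk : (k : BraidGroupA n) ∈ Hsub n := mem_H_of_alt _ k.2
  have main := Subgroup.closure_induction
    (p := fun x _ => ∀ hm : x ∈ braidAAlt n, phiK n (psiK n ⟨x, hm⟩) = ⟨x, hm⟩)
    (fun x hx => by
      obtain ⟨g, rfl⟩ := hx
      intro hm
      have hp := psiK_phiK (n := n) (PresentedGroup.of g)
      have e : (⟨phi n (PresentedGroup.of g), hm⟩ : braidAAlt n) = phiK n (PresentedGroup.of g) :=
        Subtype.ext rfl
      rw [e, hp])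
    (fun hm => by
      have e : (⟨(1 : BraidGroupA n), hm⟩ : braidAAlt n) = 1 := rfl
      rw [e, map_one, map_one])
    (fun x y hx hy px py => by
      intro hm
      have hxA : x ∈ braidAAlt n := H_le_alt hx
      have hyA : y ∈ braidAAlt n := H_le_alt hy
      have e : (⟨x*y, hm⟩ : braidAAlt n) = ⟨x, hxA⟩ * ⟨y, hyA⟩ := rfl
      rw [e, map_mul, map_mul, px hxA, py hyA])
    (fun x hx px => by
      intro hm
      have hxA : x ∈ braidAAlt n := H_le_alt hx
      have e : (⟨x⁻¹, hm⟩ : braidAAlt n) = (⟨x, hxA⟩)⁻¹ := rfl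
      rw [e, map_inv, map_inv, px hxA])
    hk
  exact main k.2

def theEquiv (n : ℕ) : P n ≃* braidAAlt n where
  toFun := phiK n
  invFun := psiK n
  left_inv := psiK_phiK (n := n)
  right_inv := phiK_psiK (n := n)
  map_mul' := map_mul _

end AltBraidProof
/-- The alternating subgroup `𝓑⁺(A_{n+2})` of the type A braid group is isomorphic to the
group presented by `r_1, …, r_{n+1}`, `t_0, …, t_{n+1}` with the listed relations, via
`r_i ↦ g_{i-1} g_i⁻¹` and `t_i ↦ g_i²`. -/
theorem alternating_braid_group_typeA_edge_presentation (n : ℕ) :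
    ∃ e : PresentedGroup (altBraidARels2 n) ≃* braidAAlt n,
      (∀ (i : Fin (n + 2)) (h : i ≠ 0),
        ((e (PresentedGroup.of (Sum.inl ⟨i, h⟩)) : braidAAlt n) : BraidGroupA n) =
          braidAGen n (i - 1) * (braidAGen n i)⁻¹) ∧
      (∀ i : Fin (n + 2),
        ((e (PresentedGroup.of (Sum.inr i)) : braidAAlt n) : BraidGroupA n) =
          braidAGen n i * braidAGen n i) := by
  refine ⟨AltBraidProof.theEquiv n, fun i h => ?_, fun i => ?_⟩
  · show AltBraidProof.phi n (PresentedGroup.of (Sum.inl ⟨i, h⟩)) = _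
    erw [AltBraidProof.phi_of]
    rfl
  · show AltBraidProof.phi n (PresentedGroup.of (Sum.inr i)) = _
    erw [AltBraidProof.phi_of]
    rfl
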